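/- For every even n ≥ 8, the graph G_n, defined as the complement of the disjoint union of two cycles of length n/2, is not an autograph. -/

import Mathlib

variable {m : ℕ}

lemma zmod_ne (hm : 4 ≤ m) : (1:ZMod m) ≠ 0 ∧ (2:ZMod m) ≠ 0 ∧ (3:ZMod m) ≠ 0 := by
  haveI : NeZero m := ⟨by omega⟩
  refine ⟨?_, ?_, ?_⟩ <;>
  · intro hh
    have h2 : ∃ k, k < 4 ∧ 0 < k ∧ ((k:ℕ) : ZMod m) = 0 := by
      first
      | exact ⟨1, by norm_num, by norm_num, by push_cast; exact hh⟩
      | exact ⟨2, by norm_num, by norm_num, by push_cast; exact hh⟩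
      | exact ⟨3, by norm_num, by norm_num, by push_cast; exact hh⟩
    obtain ⟨k, hk4, hk0, hk⟩ := h2
    rw [ZMod.natCast_eq_zero_iff] at hk
    have := Nat.le_of_dvd hk0 hk
    omega

lemma fin2_all : ∀ a j : Fin 2, j = a ∨ j = a + 1 := by decide
lemma fin2_succ_ne : ∀ a : Fin 2, a + 1 ≠ a := by decide

lemma embed (hm : 4 ≤ m) (ℓ : Fin 2 × ZMod m → ℤ)
    (hR1 : ∀ v w : Fin 2 × ZMod m, v.1 = w.1 → (v.2 - w.2 = 1 ∨ w.2 - v.2 = 1) →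
      ¬ ∃ u, ℓ u = |ℓ v - ℓ w|)
    (hR2 : ∀ v w : Fin 2 × ZMod m, v ≠ w → ¬(v.1 = w.1 ∧ (v.2 - w.2 = 1 ∨ w.2 - v.2 = 1)) →
      ∃ u, ℓ u = |ℓ v - ℓ w|)
    (hinj : Function.Injective ℓ)
    (i : Fin 2) (K ε : ℤ) (hε : ε = 1 ∨ ε = -1)
    (hex : ∀ x : ZMod m, ∃ u, ℓ u = K + ε * ℓ (i, x)) :
    ∃ (j : Fin 2) (c η : ZMod m), (η = 1 ∨ η = -1) ∧
      ∀ x, ℓ (j, c + η * x) = K + ε * ℓ (i, x) := by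
  haveI : NeZero m := ⟨by omega⟩
  obtain ⟨h1z, h2z, h3z⟩ := zmod_ne hm
  choose F hF using hex
  have hεabs : |ε| = 1 := by rcases hε with rfl | rfl <;> norm_num
  have hiinj : ∀ x y : ZMod m, ℓ (i, x) = ℓ (i, y) → x = y := by
    intro x y h
    have := hinj (a₁ := (i,x)) (a₂ := (i,y)) h
    exact congrArg Prod.snd this
  have hFinj : ∀ x y, F x = F y → x = y := by
    intro x y h
    have h2 : K + ε * ℓ (i, x) = K + ε * ℓ (i, y) := by rw [← hF, ← hF, h]
    have h3 : ℓ (i, x) = ℓ (i, y) := by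
      rcases hε with rfl | rfl <;> [skip; skip] <;> linarith
    exact hiinj _ _ h3
  have habs : ∀ x y, |ℓ (F x) - ℓ (F y)| = |ℓ (i,x) - ℓ (i,y)| := by
    intro x y
    have h : ℓ (F x) - ℓ (F y) = ε * (ℓ (i,x) - ℓ (i,y)) := by rw [hF, hF]; ring
    rw [h, abs_mul, hεabs, one_mul]
  -- transfer of adjacency
  have same1 : ∀ x : ZMod m, (F (x+1)).1 = (F x).1 ∧
      ((F (x+1)).2 - (F x).2 = 1 ∨ (F x).2 - (F (x+1)).2 = 1) := by
    intro x
    have hxne : (x+1) ≠ x := by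
      intro hh; exact h1z (by linear_combination hh)
    have hadj : ((i,x+1) : Fin 2 × ZMod m).2 - ((i,x) : Fin 2 × ZMod m).2 = 1 ∨
        ((i,x) : Fin 2 × ZMod m).2 - ((i,x+1) : Fin 2 × ZMod m).2 = 1 := by
      left; show (x+1) - x = 1; ring
    have hnL : ¬ ∃ u, ℓ u = |ℓ (i,x+1) - ℓ (i,x)| := hR1 (i,x+1) (i,x) rfl hadj
    by_contra hcon
    rw [not_and_or] at hcon
    have hFne : F (x+1) ≠ F x := fun h => hxne (hFinj _ _ h)
    have := hR2 (F (x+1)) (F x) hFne (by tauto)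
    rw [habs] at this
    exact hnL this
  -- first coordinate constant
  have hconst1 : ∀ x : ZMod m, (F x).1 = (F 0).1 := by
    have hnat : ∀ k : ℕ, (F (k:ZMod m)).1 = (F 0).1 := by
      intro k
      induction k with
      | zero => norm_num
      | succ k ih =>
        have : ((k+1:ℕ) : ZMod m) = (k:ZMod m) + 1 := by push_cast; ring
        rw [this, (same1 (k:ZMod m)).1, ih]
    intro x
    obtain ⟨k, rfl⟩ := ZMod.natCast_zmod_surjective (n := m) x
    exact hnat k
  have h2ne : ∀ x : ZMod m, (F (x+1+1)).2 ≠ (F x).2 := by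
    intro x h
    have heq : F (x+1+1) = F x := Prod.ext ((hconst1 _).trans (hconst1 x).symm) h
    have := hFinj _ _ heq
    apply h2z
    linear_combination this
  -- steps
  have hstep : ∀ x : ZMod m, (F (x+1)).2 - (F x).2 = 1 ∨ (F (x+1)).2 - (F x).2 = -1 := by
    intro x
    rcases (same1 x).2 with h | h
    · exact Or.inl h
    · right; linear_combination -h
  have hsgn : ∀ x : ZMod m, (F (x+1)).2 - (F x).2 = (F 1).2 - (F 0).2 := by
    have key : ∀ x : ZMod m, (F (x+1+1)).2 - (F (x+1)).2 = (F (x+1)).2 - (F x).2 := by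
      intro x
      rcases hstep (x+1) with h1 | h1 <;> rcases hstep x with h2 | h2
      · rw [h1, h2]
      · exfalso; apply h2ne x; linear_combination h1 + h2
      · exfalso; apply h2ne x; linear_combination h1 + h2
      · rw [h1, h2]
    have hnat : ∀ k : ℕ, (F ((k:ZMod m)+1)).2 - (F (k:ZMod m)).2 = (F 1).2 - (F 0).2 := by
      intro k
      induction k with
      | zero => norm_num
      | succ k ih =>
        have e : ((k+1:ℕ) : ZMod m) = (k:ZMod m) + 1 := by push_cast; ring
        rw [e, key, ih]
    intro x
    obtain ⟨k, rfl⟩ := ZMod.natCast_zmod_surjective (n := m) x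
    exact hnat k
  set η : ZMod m := (F 1).2 - (F 0).2 with hηdef
  have hη : η = 1 ∨ η = -1 := by
    have := hstep 0; rw [zero_add] at this; exact this
  have hcoord : ∀ x : ZMod m, (F x).2 = (F 0).2 + η * x := by
    have hnat : ∀ k : ℕ, (F (k:ZMod m)).2 = (F 0).2 + η * (k:ZMod m) := by
      intro k
      induction k with
      | zero => norm_num
      | succ k ih =>
        have e : ((k+1:ℕ) : ZMod m) = (k:ZMod m) + 1 := by push_cast; ring
        rw [e]
        have e2 : (F ((k:ZMod m)+1)).2 = (F (k:ZMod m)).2 + η := by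
          have := hsgn (k:ZMod m); linear_combination this
        rw [e2, ih]; ring
    intro x
    obtain ⟨k, rfl⟩ := ZMod.natCast_zmod_surjective (n := m) x
    exact hnat k
  refine ⟨(F 0).1, (F 0).2, η, hη, ?_⟩
  intro x
  have : F x = ((F 0).1, (F 0).2 + η * x) := Prod.ext (hconst1 x) (hcoord x)
  rw [← this]
  exact hF x

lemma endgame (T L : ℤ → Prop)
    (hL : ∀ z, L z ↔ T z ∨ T (z-1))
    (hT1 : T 1)
    (hTpos : ∀ t, T t → 1 ≤ t)
    (hgap : ∀ a, ¬(T a ∧ T (a+1)))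
    (B : ℤ) (hBmax : ∀ t, T t → t ≤ B)
    (hsig : ∀ t, T t → T (B+1-t))
    (hG1 : ∀ t s, T t → T s → L |t + 1 - s|)
    (P Q : ℤ) (hTP : T P) (hTQ : T Q) (hPQ : P < Q) (hP1 : P ≠ 1)
    (hnLP : ¬ L (P-1)) (hnLQ : ¬ L (Q-1))
    (hmarker : ∀ z, 1 ≤ z → ¬ L z → ∀ t, T t → t = z+1 → t = P ∨ t = Q)
    (hQP : L (Q - P)) : False := by
  have Teq : ∀ {a b : ℤ}, T a → a = b → T b := fun h e => e ▸ h
  have hnT2 : ¬ T 2 := fun hh => hgap 1 ⟨hT1, by norm_num [hh]⟩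
  have pred : ∀ t, T t → t ≠ 1 → T (t-2) ∨ T (t-3) := by
    intro t ht hne
    have h1 := hTpos t ht
    have h3 : 3 ≤ t := by
      rcases eq_or_ne t 2 with h | h
      · exact absurd (h ▸ ht) hnT2
      · omega
    have hg := hG1 1 t hT1 ht
    have habs : |(1:ℤ) + 1 - t| = t - 2 := by
      have e : (1:ℤ)+1-t = -(t-2) := by ring
      rw [e, abs_neg, abs_of_nonneg (by omega)]
    rw [habs, hL] at hg
    exact hg.imp (fun h => Teq h rfl) (fun h => Teq h (by ring))
  have succ : ∀ t, T t → t ≠ B → T (t+2) ∨ T (t+3) := by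
    intro t ht hne
    have h1 : T (B+1-t) := hsig t ht
    have h2 : B+1-t ≠ 1 := by intro hh; exact hne (by omega)
    rcases pred _ h1 h2 with h | h
    · exact Or.inl (Teq (hsig _ h) (by ring))
    · exact Or.inr (Teq (hsig _ h) (by ring))
  have hnLP' := hnLP; rw [hL] at hnLP'; push_neg at hnLP'
  have hnLQ' := hnLQ; rw [hL] at hnLQ'; push_neg at hnLQ'
  have nTP1 : ¬ T (P-1) := hnLP'.1
  have nTP2 : ¬ T (P-2) := fun h => hnLP'.2 (Teq h (by ring))
  have nTQ1 : ¬ T (Q-1) := hnLQ'.1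
  have nTQ2 : ¬ T (Q-2) := fun h => hnLQ'.2 (Teq h (by ring))
  have hP4 : 4 ≤ P := by
    have h1 := hTpos P hTP
    rcases eq_or_ne P 2 with h | h
    · exact absurd (h ▸ hTP) hnT2
    rcases eq_or_ne P 3 with h3 | h3
    · exact absurd (by rw [hL, h3]; right; norm_num [hT1]) hnLP
    omega
  have hQB : Q ≤ B := hBmax Q hTQ
  have parityA : ∀ N : ℕ, ∀ t : ℤ, t.toNat ≤ N → T t → t ≤ P - 3 → t % 2 = 1 := by
    intro N
    induction N with
    | zero => intro t h1 h2 h3; have := hTpos t h2; omega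
    | succ N ih =>
      intro t h1 h2 h3
      have ht1 := hTpos t h2
      rcases eq_or_ne t 1 with he | he
      · omega
      have ht2 : t ≠ 2 := fun hh => absurd (hh ▸ h2) hnT2
      rcases pred t h2 he with h4 | h4
      · have := ih (t-2) (by omega) h4 (by omega); omega
      · by_cases h5 : T (t-2)
        · have := ih (t-2) (by omega) h5 (by omega); omega
        · have h6 : ¬ T (t-1) := fun hh => hgap (t-1) ⟨hh, Teq h2 (by ring)⟩
          have h7 : ¬ L (t-1) := by
            rw [hL]; push_neg; exact ⟨h6, fun hh => h5 (Teq hh (by ring))⟩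
          have := hmarker (t-1) (by omega) h7 t h2 (by ring)
          omega
  have parA : ∀ t, T t → t ≤ P - 3 → t % 2 = 1 := fun t ht hle =>
    parityA t.toNat t le_rfl ht hle
  have TP3 : T (P-3) := by
    rcases pred P hTP hP1 with h | h
    · exact absurd (Teq h (by ring)) nTP2
    · exact h
  have hPodd : P % 2 = 0 := by have := parA _ TP3 le_rfl; omega
  have TQ3 : T (Q-3) := by
    rcases pred Q hTQ (by omega) with h | h
    · exact absurd (Teq h (by ring)) nTQ2
    · exact h
  have hQP3 : P ≤ Q - 3 := by
    have h1 : Q - 3 ≠ P - 1 := fun hh => nTP1 (Teq TQ3 hh)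
    have h2 : Q - 3 ≠ P - 2 := fun hh => nTP2 (Teq TQ3 hh)
    omega
  have parityB : ∀ N : ℕ, ∀ t : ℤ, (t - P).toNat ≤ N → T t → P ≤ t → t ≤ Q - 3 → t % 2 = 0 := by
    intro N
    induction N with
    | zero => intro t h1 h2 h3 h4; omega
    | succ N ih =>
      intro t h1 h2 h3 h4
      rcases eq_or_ne t P with he | he
      · omega
      have ht2 : t ≠ P + 1 := fun hh => hgap P ⟨hTP, hh ▸ h2⟩
      rcases pred t h2 (by omega) with h5 | h5
      · have := ih (t-2) (by omega) h5 (by omega) (by omega); omega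
      · by_cases h6 : T (t-2)
        · have := ih (t-2) (by omega) h6 (by omega) (by omega); omega
        · have h7 : ¬ T (t-1) := fun hh => hgap (t-1) ⟨hh, Teq h2 (by ring)⟩
          have h8 : ¬ L (t-1) := by
            rw [hL]; push_neg; exact ⟨h7, fun hh => h6 (Teq hh (by ring))⟩
          have := hmarker (t-1) (by omega) h8 t h2 (by ring)
          omega
  have parB : ∀ t, T t → P ≤ t → t ≤ Q - 3 → t % 2 = 0 := fun t ht h1 h2 =>
    parityB (t-P).toNat t le_rfl ht h1 h2
  have hQodd : Q % 2 = 1 := by have := parB _ TQ3 hQP3 le_rfl; omega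
  have exB2 : ∀ N : ℕ, ∀ t : ℤ, (t - P).toNat ≤ N → P ≤ t → t ≤ Q - 3 → t % 2 = 0 → T t := by
    intro N
    induction N with
    | zero => intro t h1 h2 h3 h4; exact Teq hTP (by omega)
    | succ N ih =>
      intro t h1 h2 h3 h4
      rcases eq_or_ne t P with he | he
      · exact Teq hTP he.symm
      have ht : P + 2 ≤ t := by omega
      have hT2 : T (t-2) := ih (t-2) (by omega) (by omega) (by omega) (by omega)
      rcases succ (t-2) hT2 (by omega) with h5 | h5
      · exact Teq h5 (by ring)
      · exfalso
        have h5' : T (t+1) := Teq h5 (by ring)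
        rcases le_or_gt (t+1) (Q-3) with h6 | h6
        · have := parB (t+1) h5' (by omega) h6; omega
        · exact nTQ2 (Teq h5' (by omega))
  have hQle1 : Q ≤ 2*P - 1 := by
    by_contra hcon
    push_neg at hcon
    have h2P : T (2*P - 2) :=
      exB2 (2*P-2-P).toNat (2*P-2) le_rfl (by omega) (by omega) (by omega)
    have hg := hG1 (2*P-2) P h2P hTP
    have habs : |(2*P - 2:ℤ) + 1 - P| = P - 1 := by
      rw [abs_of_nonneg (by omega)]; ring
    rw [habs] at hg
    exact hnLP hg
  have hQne : Q ≠ 2*P - 1 := by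
    intro hh
    apply hnLP
    have : Q - P = P - 1 := by omega
    rwa [this] at hQP
  have hQle : Q ≤ 2*P - 3 := by omega
  have hTQP : T (Q - P) := by
    rw [hL] at hQP
    rcases hQP with h | h
    · exact h
    · exfalso
      have := parA (Q-P-1) h (by omega)
      omega
  have hg := hG1 (Q-P) Q hTQP hTQ
  have habs : |(Q - P:ℤ) + 1 - Q| = P - 1 := by
    have e : (Q-P:ℤ)+1-Q = -(P-1) := by ring
    rw [e, abs_neg, abs_of_nonneg (by omega)]
  rw [habs] at hg
  exact hnLP hg

lemma no_signature (hm : 4 ≤ m) (ℓ : Fin 2 × ZMod m → ℤ)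
    (hR1 : ∀ v w : Fin 2 × ZMod m, v.1 = w.1 → (v.2 - w.2 = 1 ∨ w.2 - v.2 = 1) →
      ¬ ∃ u, ℓ u = |ℓ v - ℓ w|)
    (hR2 : ∀ v w : Fin 2 × ZMod m, v ≠ w → ¬(v.1 = w.1 ∧ (v.2 - w.2 = 1 ∨ w.2 - v.2 = 1)) →
      ∃ u, ℓ u = |ℓ v - ℓ w|) : False := by
  haveI : NeZero m := ⟨by omega⟩
  obtain ⟨h1z, h2z, h3z⟩ := zmod_ne hm
  -- step 1 : adjacent vertices in a cycle have distinct labels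
  have adj_ne : ∀ (i : Fin 2) (x : ZMod m), ℓ (i, x) ≠ ℓ (i, x+1) := by
    intro i x heq
    have hn2 : ((i,x) : Fin 2 × ZMod m) ≠ (i, x+1+1) := by
      intro hh
      have := congrArg Prod.snd hh
      exact h2z (by linear_combination -this)
    have hnadj : ¬((i = i) ∧ (x - (x+1+1) = 1 ∨ (x+1+1) - x = 1)) := by
      rintro ⟨-, h | h⟩
      · exact h3z (by linear_combination -h)
      · exact h1z (by linear_combination h - (by ring : (x:ZMod m)+1+1-x = 1+1) + (by ring : (1:ZMod m)+1-1 = 1))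
    have hIn := hR2 (i,x) (i,x+1+1) hn2 (by simpa using hnadj)
    have hadj : ((i,x+1) : Fin 2 × ZMod m).2 - ((i,x+1+1) : Fin 2 × ZMod m).2 = 1 ∨
        ((i,x+1+1) : Fin 2 × ZMod m).2 - ((i,x+1) : Fin 2 × ZMod m).2 = 1 := by
      right; show (x+1+1) - (x+1) = 1; ring
    have hnIn := hR1 (i,x+1) (i,x+1+1) rfl hadj
    rw [heq] at hIn
    exact hnIn hIn
  -- max vertex
  obtain ⟨v₀, hv₀⟩ := Finite.exists_max ℓ
  set α := ℓ v₀ with hαdef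
  set iX := v₀.1 with hiXdef
  set iY := v₀.1 + 1 with hiYdef
  have hXY : iY ≠ iX := fin2_succ_ne _
  -- cross pairs
  have hcross : ∀ (u w : Fin 2 × ZMod m), u.1 ≠ w.1 → ∃ z, ℓ z = |ℓ u - ℓ w| := by
    intro u w h
    exact hR2 u w (fun hh => h (congrArg Prod.fst hh)) (fun hh => h hh.1)
  -- Y labels are nonnegative
  have hYpos0 : ∀ x : ZMod m, 0 ≤ ℓ (iY, x) := by
    intro x
    obtain ⟨z, hz⟩ := hcross v₀ (iY, x) (fun hh => fin2_succ_ne v₀.1 hh.symm)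
    rw [abs_of_nonneg (by linarith [hv₀ (iY,x)] : (0:ℤ) ≤ ℓ v₀ - ℓ (iY,x))] at hz
    have := hv₀ z
    omega
  -- Y labels are positive
  have hYpos : ∀ x : ZMod m, 0 < ℓ (iY, x) := by
    intro x
    rcases lt_or_eq_of_le (hYpos0 x) with h | h
    · exact h
    exfalso
    have h1 : 0 < ℓ (iY, x+1) :=
      lt_of_le_of_ne (hYpos0 (x+1)) (fun hh => adj_ne iY x (by omega))
    have hadj : ((iY,x+1) : Fin 2 × ZMod m).2 - ((iY,x) : Fin 2 × ZMod m).2 = 1 ∨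
        ((iY,x) : Fin 2 × ZMod m).2 - ((iY,x+1) : Fin 2 × ZMod m).2 = 1 := by
      left; show (x+1) - x = 1; ring
    apply hR1 (iY,x+1) (iY,x) rfl hadj
    refine ⟨(iY,x+1), ?_⟩
    rw [abs_of_nonneg (by omega)]
    omega
  have hα : 0 < α := lt_of_lt_of_le (hYpos 0) (hv₀ (iY,0))
  have hiYX : iY = iX + 1 := by rw [hiYdef, hiXdef]
  -- negatives are cycle-neighbours of the max vertex
  have hneg : ∀ u : Fin 2 × ZMod m, ℓ u < 0 →
      u.1 = iX ∧ (u.2 = v₀.2 - 1 ∨ u.2 = v₀.2 + 1) := by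
    intro u hu
    have hne : v₀ ≠ u := by intro hh; rw [← hh] at hu; omega
    by_cases hadj : v₀.1 = u.1 ∧ (v₀.2 - u.2 = 1 ∨ u.2 - v₀.2 = 1)
    · refine ⟨hadj.1.symm, ?_⟩
      rcases hadj.2 with h | h
      · left; linear_combination -h
      · right; linear_combination h
    · obtain ⟨z, hz⟩ := hR2 v₀ u hne hadj
      rw [abs_of_nonneg (by linarith [hv₀ u])] at hz
      have := hv₀ z
      omega
  -- no label is zero
  have hL0 : ¬ ∃ u : Fin 2 × ZMod m, ℓ u = 0 := by
    rintro ⟨z, hz⟩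
    rcases fin2_all iX z.1 with hz1 | hz1
    swap
    · -- z in cycle Y
      rw [← hiYX] at hz1
      have he : (iY, z.2) = z := Prod.ext hz1.symm rfl
      have h1 := hYpos z.2
      rw [he] at h1
      omega
    -- z in cycle X
    have hzz : (iX, z.2) = z := Prod.ext hz1.symm rfl
    have hlz : ℓ (iX, z.2) = 0 := by rw [hzz, hz]
    have hpneg : ℓ (iX, z.2+1) < 0 := by
      rcases lt_trichotomy (ℓ (iX, z.2+1)) 0 with h | h | h
      · exact h
      · exact absurd (by rw [hlz, h]) (adj_ne iX z.2)
      · exfalso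
        apply hR1 (iX, z.2+1) (iX, z.2) rfl (by left; show (z.2+1) - z.2 = 1; ring)
        exact ⟨(iX, z.2+1), by rw [hlz, abs_of_nonneg (by omega)]; omega⟩
    have hqneg : ℓ (iX, z.2-1) < 0 := by
      have hne' : ℓ (iX, z.2-1) ≠ 0 := by
        intro hh
        apply adj_ne iX (z.2-1)
        rw [hh]
        rw [show z.2 - 1 + 1 = z.2 by ring, hlz]
      rcases lt_trichotomy (ℓ (iX, z.2-1)) 0 with h | h | h
      · exact h
      · exact absurd h hne'
      · exfalso
        apply hR1 (iX, z.2) (iX, z.2-1) rfl (by left; show z.2 - (z.2-1) = 1; ring)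
        exact ⟨(iX, z.2-1), by rw [hlz, abs_of_nonpos (by omega)]; omega⟩
    obtain ⟨-, hp2⟩ := hneg (iX, z.2+1) hpneg
    obtain ⟨-, hq2⟩ := hneg (iX, z.2-1) hqneg
    rcases hp2 with hp | hp <;> rcases hq2 with hq | hq
    · -- z.2+1 = v₀.2-1, z.2-1 = v₀.2-1 : 2 = 0
      exact h2z (by linear_combination hp - hq)
    · -- z.2+1 = v₀.2-1, z.2-1 = v₀.2+1 : m = 4 special case
      have h4 : ((4:ℕ) : ZMod m) = 0 := by
        push_cast
        linear_combination hp - hq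
      rw [ZMod.natCast_eq_zero_iff] at h4
      have hm4 : m = 4 := by
        have := Nat.le_of_dvd (by norm_num) h4
        omega
      subst hm4
      -- the whole cycle X is v₀, p, z, q
      have hv2 : v₀.2 = z.2 + 2 := by
        have : ∀ a b : ZMod 4, a - 1 = b + 1 → b = a + 2 := by decide
        exact this _ _ hq
      obtain ⟨yβ, hyβ⟩ := Finite.exists_max (fun x : ZMod 4 => ℓ (iY, x))
      obtain ⟨u1, hu1⟩ := hcross (iY, yβ) (iX, z.2+1) (fun hh => hXY hh)
      rw [abs_of_nonneg (by have := hYpos yβ; omega)] at hu1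
      have hu1X : u1.1 = iX := by
        rcases fin2_all iX u1.1 with h | h
        · exact h
        · exfalso
          rw [← hiYX] at h
          have he : (iY, u1.2) = u1 := Prod.ext h.symm rfl
          have h2 := hyβ u1.2
          rw [he] at h2
          have := hYpos yβ
          omega
      have hall4 : ∀ d c : ZMod 4, c = d ∨ c = d+1 ∨ c = d+2 ∨ c = d-1 := by
        decide
      have hu1val : ℓ u1 = ℓ (iX, u1.2) := by
        have he : ((iX, u1.2) : Fin 2 × ZMod 4) = u1 := Prod.ext hu1X.symm rfl
        rw [he]
      have hEq : ℓ (iY, yβ) - ℓ (iX, z.2+1) = α := by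
        rcases hall4 z.2 u1.2 with h | h | h | h
        · exfalso
          rw [hu1val, h, hlz] at hu1
          have := hYpos yβ
          omega
        · exfalso
          rw [hu1val, h] at hu1
          have := hYpos yβ
          omega
        · rw [hu1val, h] at hu1
          have : (iX, z.2+2) = v₀ := Prod.ext rfl (by rw [hv2])
          rw [this] at hu1
          omega
        · exfalso
          rw [hu1val, h] at hu1
          have := hYpos yβ
          omega
      -- now: cross pair (v₀, yβ) gives label α - β, but edge (p,z) forbids it
      obtain ⟨u2, hu2⟩ := hcross v₀ (iY, yβ) (fun hh => hXY hh.symm)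
      rw [abs_of_nonneg (by linarith [hv₀ (iY,yβ)])] at hu2
      apply hR1 (iX, z.2+1) (iX, z.2) rfl (by left; show (z.2+1) - z.2 = 1; ring)
      refine ⟨u2, ?_⟩
      rw [hlz, hu2, abs_of_nonpos (by omega)]
      omega
    · -- z.2+1 = v₀.2+1, z.2-1 = v₀.2-1 : z = v₀
      exfalso
      have : z.2 = v₀.2 := by linear_combination hp
      have : z = v₀ := by
        rw [← hzz]
        exact Prod.ext (by rw [hiXdef]) this
      rw [this] at hz
      omega
    · -- z.2+1 = v₀.2+1, z.2-1 = v₀.2+1 : 2 = 0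
      exact h2z (by linear_combination hp - hq)
  -- injectivity of the labelling
  have hinj : Function.Injective ℓ := by
    intro u w h
    by_contra hne
    by_cases hadj : u.1 = w.1 ∧ (u.2 - w.2 = 1 ∨ w.2 - u.2 = 1)
    · obtain ⟨h1, h2⟩ := hadj
      rcases h2 with h2 | h2
      · apply adj_ne u.1 w.2
        have hu : (u.1, w.2 + 1) = u := Prod.ext rfl (by linear_combination -h2)
        have hw : (u.1, w.2) = w := Prod.ext h1 rfl
        rw [hu, hw]
        exact h.symm
      · apply adj_ne u.1 u.2
        have hw : (u.1, u.2 + 1) = w := Prod.ext h1 (by linear_combination -h2)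
        rw [Prod.mk.eta, hw]
        exact h
    · obtain ⟨zz, hzz⟩ := hR2 u w hne hadj
      exact hL0 ⟨zz, by rw [hzz, h]; simp⟩
  -- first application of the embedding lemma: reflection at the max
  obtain ⟨j, c, η, hη, hj⟩ := embed hm ℓ hR1 hR2 hinj iY α (-1) (Or.inr rfl) (by
    intro x
    obtain ⟨u, hu⟩ := hcross v₀ (iY, x) (fun hh => hXY hh.symm)
    rw [abs_of_nonneg (by linarith [hv₀ (iY,x)])] at hu
    exact ⟨u, by rw [hu]; ring⟩)
  have hηη : η * η = 1 := by rcases hη with rfl | rfl <;> ring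
  have hj' : ∀ x, ℓ (j, c + η * x) = α - ℓ (iY, x) := by
    intro x; rw [hj x]; ring
  have hjY : j = iY := by
    rcases fin2_all iX j with h | h
    swap
    · rw [← hiYX] at h; exact h
    exfalso
    have hx := hj' (η * (v₀.2 - c))
    rw [show c + η * (η * (v₀.2 - c)) = v₀.2 by rw [← mul_assoc, hηη]; ring, h] at hx
    have he : ((iX, v₀.2) : Fin 2 × ZMod m) = v₀ := Prod.ext hiXdef rfl
    rw [he] at hx
    have := hYpos (η * (v₀.2 - c))
    omega
  rw [hjY] at hj'
  have hσ : ∀ x, ℓ (iY, c + η * x) = α - ℓ (iY, x) := hj'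
  -- max of the cycle Y
  obtain ⟨yβ, hyβ⟩ := Finite.exists_max (fun x : ZMod m => ℓ (iY, x))
  have hYlb : ∀ x : ZMod m, α - ℓ (iY, yβ) ≤ ℓ (iY, x) := by
    intro x
    have hx := hσ (η * (x - c))
    rw [show c + η * (η * (x - c)) = x by rw [← mul_assoc, hηη]; ring] at hx
    have := hyβ (η * (x - c))
    omega
  have hβα : ℓ (iY, yβ) < α := by
    rcases lt_or_eq_of_le (hv₀ (iY, yβ)) with h | h
    · exact h
    · exact absurd (congrArg Prod.fst (hinj h)) hXY
  -- global minimum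
  obtain ⟨w₀, hw₀⟩ := Finite.exists_min ℓ
  rcases fin2_all iX w₀.1 with hw1 | hw1
  · -- case w₀ in cycle X : contradiction
    exfalso
    obtain ⟨j2, c2, η2, hη2, hj2⟩ := embed hm ℓ hR1 hR2 hinj iY (-(ℓ w₀)) 1 (Or.inl rfl) (by
      intro x
      obtain ⟨u, hu⟩ := hcross (iY, x) w₀ (fun hh => hXY (hw1 ▸ hh))
      rw [abs_of_nonneg (by linarith [hw₀ (iY,x)])] at hu
      exact ⟨u, by rw [hu]; ring⟩)
    have hη2η : η2 * η2 = 1 := by rcases hη2 with rfl | rfl <;> ring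
    have hj2' : ∀ x, ℓ (j2, c2 + η2 * x) = ℓ (iY, x) - ℓ w₀ := by
      intro x; rw [hj2 x]; ring
    rcases fin2_all iX j2 with h | h
    · -- j2 = iX
      have hx := hj2' (η2 * (v₀.2 - c2))
      rw [show c2 + η2 * (η2 * (v₀.2 - c2)) = v₀.2 by rw [← mul_assoc, hη2η]; ring, h] at hx
      have he : ((iX, v₀.2) : Fin 2 × ZMod m) = v₀ := Prod.ext hiXdef rfl
      rw [he] at hx
      have h1 := hyβ (η2 * (v₀.2 - c2))
      have hx3 := hj2' (η2 * (w₀.2 - c2))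
      rw [show c2 + η2 * (η2 * (w₀.2 - c2)) = w₀.2 by rw [← mul_assoc, hη2η]; ring, h] at hx3
      have he3 : ((iX, w₀.2) : Fin 2 × ZMod m) = w₀ := Prod.ext hw1.symm rfl
      rw [he3] at hx3
      have h3 := hYlb (η2 * (w₀.2 - c2))
      omega
    · -- j2 = iY
      rw [← hiYX] at h
      rw [h] at hj2'
      have hx := hj2' yβ
      have h1 := hyβ (c2 + η2 * yβ)
      have hx2 := hj2' (η2 * (yβ - c2))
      rw [show c2 + η2 * (η2 * (yβ - c2)) = yβ by rw [← mul_assoc, hη2η]; ring] at hx2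
      have h2 := hyβ (η2 * (yβ - c2))
      exact hL0 ⟨w₀, by omega⟩
  · -- case w₀ in cycle Y : the main (hard) case
    rw [← hiYX] at hw1
    have hw₀Y : ℓ w₀ = α - ℓ (iY, yβ) := by
      have he : ((iY, w₀.2) : Fin 2 × ZMod m) = w₀ := Prod.ext hw1.symm rfl
      have h1 := hYlb w₀.2
      rw [he] at h1
      have h2 := hw₀ (iY, c + η * yβ)
      rw [hσ yβ] at h2
      omega
    -- third embedding: cycle X shifted down by b
    obtain ⟨j3, c3, η3, hη3, hj3⟩ := embed hm ℓ hR1 hR2 hinj iX (-(α - ℓ (iY, yβ))) 1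
      (Or.inl rfl) (by
      intro x
      obtain ⟨u, hu⟩ := hcross (iX, x) w₀ (fun hh => hXY (hw1 ▸ hh).symm)
      rw [abs_of_nonneg (by have := hw₀ (iX,x); omega)] at hu
      exact ⟨u, by rw [hu, hw₀Y]; ring⟩)
    have hη3η : η3 * η3 = 1 := by rcases hη3 with rfl | rfl <;> ring
    have hj3' : ∀ x, ℓ (j3, c3 + η3 * x) = ℓ (iX, x) - (α - ℓ (iY, yβ)) := by
      intro x; rw [hj3 x]; ring
    rcases fin2_all iX j3 with h | h
    · -- j3 = iX : impossible by minimality on X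
      exfalso
      obtain ⟨xm, hxm⟩ := Finite.exists_min (fun x : ZMod m => ℓ (iX, x))
      have hx := hj3' xm
      rw [h] at hx
      have h1 := hxm (c3 + η3 * xm)
      have hβ := hβα
      omega
    · -- j3 = iY : the τ isomorphism
      rw [← hiYX] at h
      rw [h] at hj3'
      have hτ : ∀ x, ℓ (iY, c3 + η3 * x) = ℓ (iX, x) - (α - ℓ (iY, yβ)) := hj3'
      set b' : ℤ := α - ℓ (iY, yβ) with hb'def
      have hb' : 0 < b' := by omega
      have hminall : ∀ u, b' ≤ ℓ u := by intro u; have h1 := hw₀ u; omega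
      have hXval : ∀ x : ZMod m, ℓ (iX, η3 * (x - c3)) = ℓ (iY, x) + b' := by
        intro x
        have h1 := hτ (η3 * (x - c3))
        rw [show c3 + η3 * (η3 * (x - c3)) = x by rw [← mul_assoc, hη3η]; ring] at h1
        omega
      have hcrossL : ∀ x y : ZMod m, ∃ u, ℓ u = |ℓ (iY,x) + b' - ℓ (iY,y)| := by
        intro x y
        obtain ⟨u, hu⟩ := hcross (iX, η3 * (x - c3)) (iY, y) (fun hh => hXY hh.symm)
        rw [hXval x] at hu
        exact ⟨u, hu⟩
      have hval : ∀ u : Fin 2 × ZMod m,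
          (∃ x, ℓ u = ℓ (iY,x)) ∨ (∃ x, ℓ u = ℓ (iY,x) + b') := by
        intro u
        rcases fin2_all iX u.1 with h1 | h1
        · right
          refine ⟨c3 + η3 * u.2, ?_⟩
          have h2 := hτ u.2
          have he : ((iX, u.2) : Fin 2 × ZMod m) = u := Prod.ext h1.symm rfl
          rw [he] at h2
          omega
        · left
          rw [← hiYX] at h1
          exact ⟨u.2, by rw [show ((iY, u.2) : Fin 2 × ZMod m) = u from Prod.ext h1.symm rfl]⟩
      have hgapY : ∀ x y : ZMod m, ℓ (iY,x) ≠ ℓ (iY,y) →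
          ℓ (iY,y) + 2*b' ≤ ℓ (iY,x) ∨ ℓ (iY,x) + 2*b' ≤ ℓ (iY,y) := by
        intro x y hne
        obtain ⟨u1, hu1⟩ := hcrossL y x
        obtain ⟨u2, hu2⟩ := hcrossL x y
        have hm1 := hminall u1
        have hm2 := hminall u2
        rw [hu1, le_abs] at hm1
        rw [hu2, le_abs] at hm2
        omega
      have hw₀c : ℓ (iY, w₀.2) = b' := by
        rw [show ((iY, w₀.2) : Fin 2 × ZMod m) = w₀ from Prod.ext hw1.symm rfl]; omega
      have hdvd : ∀ N : ℕ, ∀ x : ZMod m, (ℓ (iY,x)).toNat ≤ N → ∃ k, ℓ (iY,x) = b' * k := by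
        intro N
        induction N with
        | zero => intro x h1; have := hYpos x; omega
        | succ N ih =>
          intro x h1
          by_cases he : ℓ (iY, x) = b'
          · exact ⟨1, by omega⟩
          have h3 : 3*b' ≤ ℓ (iY,x) := by
            have hmx := hminall (iY, x)
            rcases hgapY x w₀.2 (by rw [hw₀c]; exact he) with h | h
            · rw [hw₀c] at h; omega
            · rw [hw₀c] at h; omega
          obtain ⟨u, hu⟩ := hcrossL w₀.2 x
          rw [hw₀c, show b' + b' - ℓ (iY,x) = -(ℓ (iY,x) - 2*b') by ring, abs_neg,
            abs_of_nonneg (by omega)] at hu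
          rcases hval u with ⟨x', hx'⟩ | ⟨x', hx'⟩
          · obtain ⟨k, hk⟩ := ih x' (by omega)
            refine ⟨k + 2, ?_⟩
            have h4 : ℓ (iY,x) = ℓ (iY,x') + 2*b' := by omega
            rw [h4, hk]; ring
          · obtain ⟨k, hk⟩ := ih x' (by omega)
            refine ⟨k + 3, ?_⟩
            have h4 : ℓ (iY,x) = ℓ (iY,x') + 3*b' := by omega
            rw [h4, hk]; ring
      choose kf hkf using fun x => hdvd (ℓ (iY,x)).toNat x le_rfl
      have hcancel : ∀ a d : ℤ, b' * a = b' * d → a = d := fun a d h =>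
        mul_left_cancel₀ (by omega) h
      have hkpos : ∀ x, 1 ≤ kf x := by
        intro x
        have h1 := hminall (iY, x)
        rw [hkf x] at h1
        nlinarith
      have hx₀ : kf w₀.2 = 1 := hcancel _ _ (by rw [← hkf w₀.2, hw₀c]; ring)
      have hiff : ∀ z : ℤ, (∃ u, ℓ u = b' * z) ↔ ((∃ x, kf x = z) ∨ (∃ x, kf x = z - 1)) := by
        intro z
        constructor
        · rintro ⟨u, hu⟩
          rcases hval u with ⟨x, hx⟩ | ⟨x, hx⟩
          · left; exact ⟨x, hcancel _ _ (by rw [← hkf x, ← hx, hu])⟩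
          · right
            refine ⟨x, hcancel _ _ ?_⟩
            rw [← hkf x]
            have h4 : ℓ (iY,x) = b' * z - b' := by omega
            rw [h4]; ring
        · rintro (⟨x, hx⟩ | ⟨x, hx⟩)
          · exact ⟨(iY, x), by rw [hkf x, hx]⟩
          · refine ⟨(iX, η3 * (x - c3)), ?_⟩
            rw [hXval x, hkf x, hx]; ring
      have hG1' : ∀ t s : ℤ, (∃x, kf x = t) → (∃x, kf x = s) →
          ((∃ x, kf x = |t+1-s|) ∨ (∃ x, kf x = |t+1-s| - 1)) := by
        rintro t s ⟨x, hx⟩ ⟨y, hy⟩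
        apply (hiff _).mp
        obtain ⟨u, hu⟩ := hcrossL x y
        refine ⟨u, ?_⟩
        rw [hu, hkf x, hkf y, hx, hy,
          show b' * t + b' - b' * s = b' * (t + 1 - s) by ring, abs_mul, abs_of_pos hb']
      have hgapk : ∀ a : ℤ, ¬((∃x, kf x = a) ∧ (∃x, kf x = a+1)) := by
        rintro a ⟨⟨x, hx⟩, ⟨y, hy⟩⟩
        have hne : ℓ (iY,x) ≠ ℓ (iY,y) := by
          rw [hkf x, hkf y, hx, hy]
          intro hh
          have := hcancel _ _ hh
          omega
        rcases hgapY x y hne with h | h <;>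
          (rw [hkf x, hkf y, hx, hy] at h; nlinarith)
      have hBmax : ∀ t, (∃x, kf x = t) → t ≤ kf yβ := by
        rintro t ⟨x, hx⟩
        have h1 := hyβ x
        rw [hkf x, hkf yβ, hx] at h1
        nlinarith
      have hsigk : ∀ t, (∃x, kf x = t) → (∃x, kf x = kf yβ + 1 - t) := by
        rintro t ⟨x, hx⟩
        refine ⟨c + η * x, hcancel _ _ ?_⟩
        rw [← hkf (c + η * x), hσ x, hkf x, hx]
        have hα' : α = b' * kf yβ + b' := by rw [← hkf yβ]; omega
        rw [hα']; ring
      have hP1 : kf (w₀.2+1) ≠ 1 := by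
        intro hh
        have h4 : ℓ (iY, w₀.2+1) = ℓ (iY, w₀.2) := by rw [hkf, hkf, hh, hx₀]
        have h5 := hinj (show ℓ ((iY, w₀.2+1) : Fin 2 × ZMod m) = ℓ (iY, w₀.2) from h4)
        have h6 := congrArg Prod.snd h5
        exact h1z (by linear_combination h6)
      have hQ1 : kf (w₀.2-1) ≠ 1 := by
        intro hh
        have h4 : ℓ (iY, w₀.2-1) = ℓ (iY, w₀.2) := by rw [hkf, hkf, hh, hx₀]
        have h5 := hinj (show ℓ ((iY, w₀.2-1) : Fin 2 × ZMod m) = ℓ (iY, w₀.2) from h4)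
        have h6 := congrArg Prod.snd h5
        exact h1z (by linear_combination -h6)
      have hPQne : kf (w₀.2+1) ≠ kf (w₀.2-1) := by
        intro hh
        have h4 : ℓ (iY, w₀.2+1) = ℓ (iY, w₀.2-1) := by rw [hkf, hkf, hh]
        have h5 := hinj (show ℓ ((iY, w₀.2+1) : Fin 2 × ZMod m) = ℓ (iY, w₀.2-1) from h4)
        have h6 := congrArg Prod.snd h5
        exact h2z (by linear_combination h6)
      have hnLP : ¬((∃x, kf x = kf (w₀.2+1) - 1) ∨ (∃x, kf x = kf (w₀.2+1) - 1 - 1)) := by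
        intro hcon
        apply hR1 (iY, w₀.2+1) (iY, w₀.2) rfl (by left; show (w₀.2+1) - w₀.2 = 1; ring)
        obtain ⟨u, hu⟩ := (hiff (kf (w₀.2+1) - 1)).mpr (by
          rcases hcon with h | h
          · exact Or.inl h
          · right; obtain ⟨x, hx⟩ := h; exact ⟨x, by omega⟩)
        refine ⟨u, ?_⟩
        rw [hu, hkf (w₀.2+1), hw₀c,
          show b' * kf (w₀.2+1) - b' = b' * (kf (w₀.2+1) - 1) by ring,
          abs_of_nonneg (by nlinarith [hkpos (w₀.2+1)])]
      have hnLQ : ¬((∃x, kf x = kf (w₀.2-1) - 1) ∨ (∃x, kf x = kf (w₀.2-1) - 1 - 1)) := by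
        intro hcon
        apply hR1 (iY, w₀.2) (iY, w₀.2-1) rfl (by left; show w₀.2 - (w₀.2-1) = 1; ring)
        obtain ⟨u, hu⟩ := (hiff (kf (w₀.2-1) - 1)).mpr (by
          rcases hcon with h | h
          · exact Or.inl h
          · right; obtain ⟨x, hx⟩ := h; exact ⟨x, by omega⟩)
        refine ⟨u, ?_⟩
        rw [hu, hkf (w₀.2-1), hw₀c,
          show b' - b' * kf (w₀.2-1) = -(b' * (kf (w₀.2-1) - 1)) by ring, abs_neg,
          abs_of_nonneg (by nlinarith [hkpos (w₀.2-1)])]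
      have hmarker : ∀ z, 1 ≤ z → ¬((∃x, kf x = z) ∨ (∃x, kf x = z - 1)) →
          ∀ t, (∃x, kf x = t) → t = z+1 → t = kf (w₀.2+1) ∨ t = kf (w₀.2-1) := by
        rintro z hz hnL t ⟨x, hx⟩ ht
        have hxne : ((iY,x) : Fin 2 × ZMod m) ≠ (iY, w₀.2) := by
          intro hh
          have h4 : x = w₀.2 := congrArg Prod.snd hh
          rw [h4] at hx
          omega
        by_cases hc : x - w₀.2 = 1 ∨ w₀.2 - x = 1
        · rcases hc with hc | hc
          · left
            have h4 : x = w₀.2 + 1 := by linear_combination hc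
            rw [← hx, h4]
          · right
            have h4 : x = w₀.2 - 1 := by linear_combination -hc
            rw [← hx, h4]
        · exfalso
          obtain ⟨u, hu⟩ := hR2 (iY, x) (iY, w₀.2) hxne (by rintro ⟨-, hh⟩; exact hc hh)
          apply hnL
          apply (hiff z).mp
          refine ⟨u, ?_⟩
          rw [hu, hkf x, hw₀c, hx, ht,
            show b' * (z+1) - b' = b' * z by ring, abs_of_nonneg (by nlinarith)]
      have hQPL : ∃ u, ℓ u = b' * |kf (w₀.2+1) - kf (w₀.2-1)| := by
        have hne2 : ((iY, w₀.2+1) : Fin 2 × ZMod m) ≠ (iY, w₀.2-1) := by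
          intro hh
          have h4 := congrArg Prod.snd hh
          exact h2z (by linear_combination h4)
        obtain ⟨u, hu⟩ := hR2 (iY, w₀.2+1) (iY, w₀.2-1) hne2 (by
          rintro ⟨-, hh | hh⟩
          · exact h1z (by linear_combination hh - (by ring : ((w₀.2:ZMod m)+1) - (w₀.2-1) - 1 - 1 = 0))
          · exact h3z (by linear_combination -hh))
        refine ⟨u, ?_⟩
        rw [hu, hkf (w₀.2+1), hkf (w₀.2-1),
          show b' * kf (w₀.2+1) - b' * kf (w₀.2-1) = b' * (kf (w₀.2+1) - kf (w₀.2-1)) by ring,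
          abs_mul, abs_of_pos hb']
      rcases lt_trichotomy (kf (w₀.2+1)) (kf (w₀.2-1)) with hlt | heq | hlt
      · exact endgame (fun t => ∃ x, kf x = t) (fun z => (∃x, kf x = z) ∨ (∃x, kf x = z-1))
          (fun z => Iff.rfl) ⟨w₀.2, hx₀⟩ (fun t ht => ht.elim (fun x hx => hx ▸ hkpos x)) hgapk
          (kf yβ) hBmax hsigk hG1'
          (kf (w₀.2+1)) (kf (w₀.2-1)) ⟨_, rfl⟩ ⟨_, rfl⟩ hlt hP1 hnLP hnLQ hmarker (by
            apply (hiff _).mp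
            obtain ⟨u, hu⟩ := hQPL
            exact ⟨u, by rw [hu, abs_of_neg (by omega)]; ring⟩)
      · exact hPQne heq
      · exact endgame (fun t => ∃ x, kf x = t) (fun z => (∃x, kf x = z) ∨ (∃x, kf x = z-1))
          (fun z => Iff.rfl) ⟨w₀.2, hx₀⟩ (fun t ht => ht.elim (fun x hx => hx ▸ hkpos x)) hgapk
          (kf yβ) hBmax hsigk hG1'
          (kf (w₀.2-1)) (kf (w₀.2+1)) ⟨_, rfl⟩ ⟨_, rfl⟩ hlt hQ1 hnLQ hnLP
          (fun z hz hnL t hT ht => (hmarker z hz hnL t hT ht).symm) (by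
            apply (hiff _).mp
            obtain ⟨u, hu⟩ := hQPL
            exact ⟨u, by rw [hu, abs_of_pos (by omega)]⟩)

/-- The disjoint union of two cycles of length `m`, on vertex set `Fin 2 × ZMod m`. -/
def twoCycles (m : ℕ) : SimpleGraph (Fin 2 × ZMod m) where
  Adj x y := x.1 = y.1 ∧ x ≠ y ∧ (x.2 - y.2 = 1 ∨ y.2 - x.2 = 1)
  symm := by
    constructor
    rintro x y ⟨h1, h2, h3⟩
    exact ⟨h1.symm, h2.symm, h3.symm⟩
  loopless := by
    constructor
    rintro x ⟨-, h, -⟩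
    exact h rfl

/-- For every even `n ≥ 8`, the graph `G_n`, the complement of the disjoint union of
two cycles of length `n/2`, is not an autograph: it admits no (multiset) signature,
i.e. no integer labeling `ℓ` of its vertices such that distinct vertices `v, w` are
adjacent iff `|ℓ v - ℓ w|` is one of the labels. -/
theorem Gn_not_autograph (n : ℕ) (hn : 8 ≤ n) (heven : Even n) :
    ¬ ∃ ℓ : Fin 2 × ZMod (n / 2) → ℤ,
        ∀ v w : Fin 2 × ZMod (n / 2), v ≠ w →
          ((twoCycles (n / 2))ᶜ.Adj v w ↔ ∃ u, ℓ u = |ℓ v - ℓ w|) := by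
  rintro ⟨ℓ, H⟩
  have hm : 4 ≤ n / 2 := by omega
  obtain ⟨h1z, -, -⟩ := zmod_ne hm
  apply no_signature hm ℓ
  · intro v w h1 h2
    have hne : v ≠ w := by
      rintro rfl
      rcases h2 with h | h <;> exact h1z (by linear_combination -h)
    intro hex
    have hcadj := (H v w hne).mpr hex
    rw [SimpleGraph.compl_adj] at hcadj
    exact hcadj.2 ⟨h1, hne, h2⟩
  · intro v w hne hnadj
    apply (H v w hne).mp
    rw [SimpleGraph.compl_adj]
    exact ⟨hne, fun hadj => hnadj ⟨hadj.1, hadj.2.2⟩⟩
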